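/- Let Γ and I be infinite sets and let 0 → c₀(Γ) → Z → c₀(I) → 0 be a twisted sum of real Banach spaces. Then Z is isomorphically polyhedral: Z admits an equivalent norm under which, for every finite-dimensional subspace F of Z, the closed unit ball of F is the convex hull of a finite set. -/

import Mathlib

open Filter Topology

noncomputable section

/-- The subspace `c₀(Γ)` of `ℓ∞(Γ)` consisting of the functions `f : Γ → ℝ` such that
for every `ε > 0` the set `{γ | ε ≤ |f γ|}` is finite. -/
def c0Submodule (Γ : Type*) : Submodule ℝ (lp (fun _ : Γ => ℝ) ⊤) where
  carrier := {f | ∀ ε : ℝ, 0 < ε → {γ : Γ | ε ≤ |f γ|}.Finite}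
  zero_mem' := by
    intro ε hε
    convert Set.finite_empty
    ext γ
    simp only [Set.mem_setOf_eq, Set.mem_empty_iff_false, iff_false, not_le]
    rw [lp.coeFn_zero]
    simpa using hε
  add_mem' := by
    intro f g hf hg ε hε
    refine ((hf (ε/2) (by linarith)).union (hg (ε/2) (by linarith))).subset ?_
    intro γ hγ
    simp only [Set.mem_setOf_eq, Set.mem_union] at hγ ⊢
    by_contra hc
    push_neg at hc
    obtain ⟨h1, h2⟩ := hc
    have habs : |(f + g : lp (fun _ : Γ => ℝ) ⊤) γ| ≤ |f γ| + |g γ| := by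
      rw [lp.coeFn_add]
      exact abs_add_le _ _
    linarith
  smul_mem' := by
    intro a f hf ε hε
    have ha : (0:ℝ) < |a| + 1 := by positivity
    refine (hf (ε / (|a| + 1)) (by positivity)).subset ?_
    intro γ hγ
    simp only [Set.mem_setOf_eq] at hγ ⊢
    have h1 : |(a • f : lp (fun _ : Γ => ℝ) ⊤) γ| = |a| * |f γ| := by
      rw [lp.coeFn_smul]
      simp [abs_mul]
    rw [h1] at hγ
    rw [div_le_iff₀ ha]
    have hfγ : (0:ℝ) ≤ |f γ| := abs_nonneg _
    nlinarith

/-- The Banach space `c₀(Γ)`. -/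
abbrev c0 (Γ : Type*) : Type _ := ↥(c0Submodule Γ)

/-- A twisted sum `0 → Y →ʲ Z →^q X → 0`: `j` is an isomorphic embedding (injective with
closed range), `q` is surjective, and `range j = ker q`. -/
def IsTwistedSum {Y Z X : Type*} [NormedAddCommGroup Y] [NormedSpace ℝ Y]
    [NormedAddCommGroup Z] [NormedSpace ℝ Z] [NormedAddCommGroup X] [NormedSpace ℝ X]
    (j : Y →L[ℝ] Z) (q : Z →L[ℝ] X) : Prop :=
  Function.Injective j ∧ IsClosed (Set.range j) ∧ Function.Surjective q ∧
    ∀ z : Z, q z = 0 ↔ z ∈ Set.range j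

/-- `n` is a norm on `Z` equivalent to the given norm. -/
def IsEquivNorm {Z : Type*} [NormedAddCommGroup Z] [NormedSpace ℝ Z] (n : Z → ℝ) : Prop :=
  (∀ z w : Z, n (z + w) ≤ n z + n w) ∧
  (∀ (a : ℝ) (z : Z), n (a • z) = |a| * n z) ∧
  ∃ c C : ℝ, 0 < c ∧ 0 < C ∧ ∀ z : Z, c * ‖z‖ ≤ n z ∧ n z ≤ C * ‖z‖

/-- The dual norm on `Z* = Z →L[ℝ] ℝ` induced by an (equivalent) norm `n` on `Z`:
`‖z*‖' = sup {|z* z| : n z ≤ 1}`. -/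
noncomputable def dualNormOf {Z : Type*} [NormedAddCommGroup Z] [NormedSpace ℝ Z]
    (n : Z → ℝ) (zstar : Z →L[ℝ] ℝ) : ℝ :=
  sSup ((fun z => |zstar z|) '' {z : Z | n z ≤ 1})
/-- `B` is a boundary with property (⋆) for `X`, with respect to a norm function `n` on `X`
and the corresponding dual norm function `nd` on `X* = X →L[ℝ] ℝ`: `B` is a subset of the
dual unit sphere, norming every point of `X`, and every weak*-accumulation point `x*` of `B`
satisfies `x* x < 1` whenever `n x = 1`. -/
def IsBoundaryWithStar {X : Type*} [NormedAddCommGroup X] [NormedSpace ℝ X]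
    (n : X → ℝ) (nd : (X →L[ℝ] ℝ) → ℝ) (B : Set (X →L[ℝ] ℝ)) : Prop :=
  (∀ xstar ∈ B, nd xstar = 1) ∧
  (∀ x : X, ∃ xstar ∈ B, xstar x = n x) ∧
  (∀ xstar : X →L[ℝ] ℝ,
    (∀ U ∈ nhds (StrongDual.toWeakDual xstar),
        ∃ b ∈ B, b ≠ xstar ∧ StrongDual.toWeakDual b ∈ U) →
    ∀ x : X, n x = 1 → xstar x < 1)

/-- The norm function `n` on `Z` is polyhedral: for every finite-dimensional subspace `F`
of `Z`, the closed unit ball of `F` (with respect to `n`) is the convex hull of a finite set. -/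
def IsPolyhedralNorm {Z : Type*} [NormedAddCommGroup Z] [NormedSpace ℝ Z] (n : Z → ℝ) : Prop :=
  ∀ F : Submodule ℝ Z, FiniteDimensional ℝ F →
    ∃ s : Finset Z, {z : Z | z ∈ F ∧ n z ≤ 1} = convexHull ℝ (s : Set Z)
set_option synthInstance.maxHeartbeats 400000
set_option maxHeartbeats 8000000

namespace TwistedAux

variable {α : Type*}

lemma coord_abs_le (x : lp (fun _ : α => ℝ) ⊤) (i : α) : |x i| ≤ ‖x‖ := by
  have := lp.norm_apply_le_norm ENNReal.top_ne_zero x i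
  rwa [Real.norm_eq_abs] at this

lemma norm_eq_iSup [Nonempty α] (x : lp (fun _ : α => ℝ) ⊤) : ‖x‖ = ⨆ i, |x i| := by
  rw [lp.norm_eq_ciSup]; simp only [Real.norm_eq_abs]

lemma c0_isClosed : IsClosed ((c0Submodule α : Set (lp (fun _ : α => ℝ) ⊤))) := by
  refine isClosed_of_closure_subset ?_
  intro f hf ε hε
  rcases Metric.mem_closure_iff.1 hf (ε / 2) (by linarith) with ⟨g, hg, hdist⟩
  have hgmem : ∀ δ : ℝ, 0 < δ → {γ : α | δ ≤ |g γ|}.Finite := hg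
  refine (hgmem (ε / 2) (by linarith)).subset ?_
  intro γ hγ
  simp only [Set.mem_setOf_eq] at hγ ⊢
  have h1 : |f γ - g γ| ≤ ‖f - g‖ := by
    have := coord_abs_le (f - g) γ
    rwa [lp.coeFn_sub, Pi.sub_apply] at this
  have h2 : ‖f - g‖ < ε / 2 := by rwa [dist_eq_norm] at hdist
  have := abs_sub_abs_le_abs_sub (f γ) (g γ)
  linarith

instance : CompleteSpace (c0 α) := c0_isClosed.isComplete.completeSpace_coe

lemma c0_coe_norm (y : c0 α) : ‖y‖ = ‖(y : lp (fun _ : α => ℝ) ⊤)‖ := rfl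

lemma c0_norm_eq [Nonempty α] (y : c0 α) :
    ‖y‖ = ⨆ i, |(y : lp (fun _ : α => ℝ) ⊤) i| := norm_eq_iSup _

lemma c0_coord_abs_le (y : c0 α) (i : α) : |(y : lp (fun _ : α => ℝ) ⊤) i| ≤ ‖y‖ :=
  coord_abs_le _ i

lemma c0_finite (y : c0 α) {δ : ℝ} (hδ : 0 < δ) :
    {i : α | δ ≤ |(y : lp (fun _ : α => ℝ) ⊤) i|}.Finite := y.2 δ hδ

/-- norm attainment in c₀ -/
lemma c0_exists_abs_eq_norm [Nonempty α] (y : c0 α) (hy : y ≠ 0) :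
    ∃ i, |(y : lp (fun _ : α => ℝ) ⊤) i| = ‖y‖ := by
  set x := (y : lp (fun _ : α => ℝ) ⊤) with hx
  have hxne : x ≠ 0 := by
    intro h0
    exact hy (Subtype.ext h0)
  have hs : 0 < ‖y‖ := by
    rw [c0_coe_norm]; exact norm_pos_iff.2 hxne
  have hGfin : {i : α | ‖y‖ / 2 ≤ |x i|}.Finite := c0_finite y (by linarith)
  have hbdd : BddAbove (Set.range fun i => |x i|) :=
    ⟨‖y‖, by rintro r ⟨i, rfl⟩; exact c0_coord_abs_le y i⟩
  obtain ⟨i0, hi0⟩ : ∃ i, ‖y‖ / 2 < |x i| := by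
    apply exists_lt_of_lt_ciSup
    rw [← c0_norm_eq]; linarith
  have hi0G : i0 ∈ hGfin.toFinset := by
    simp only [Set.Finite.mem_toFinset, Set.mem_setOf_eq]; linarith
  obtain ⟨i1, hi1G, hi1max⟩ := hGfin.toFinset.exists_max_image (fun i => |x i|) ⟨i0, hi0G⟩
  refine ⟨i1, le_antisymm (c0_coord_abs_le y i1) ?_⟩
  rw [c0_norm_eq]
  apply ciSup_le
  intro i
  by_cases hiG : i ∈ hGfin.toFinset
  · exact hi1max i hiG
  · have : ¬ (‖y‖ / 2 ≤ |x i|) := by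
      simpa only [Set.Finite.mem_toFinset, Set.mem_setOf_eq] using hiG
    have h2 := hi1max i0 hi0G
    push_neg at this
    linarith

/-- coordinate functional on c₀ -/
def coordCLM (i : α) : c0 α →L[ℝ] ℝ :=
  LinearMap.mkContinuous
    { toFun := fun y => (y : lp (fun _ : α => ℝ) ⊤) i
      map_add' := by intro y w; simp [lp.coeFn_add, Pi.add_apply]
      map_smul' := by intro a y; simp [lp.coeFn_smul, Pi.smul_apply] }
    1 (fun y => by rw [one_mul]; exact c0_coord_abs_le y i)

@[simp] lemma coordCLM_apply (i : α) (y : c0 α) :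
    coordCLM i y = (y : lp (fun _ : α => ℝ) ⊤) i := rfl

lemma coordCLM_norm_le (i : α) : ‖(coordCLM (α := α) i)‖ ≤ 1 :=
  LinearMap.mkContinuous_norm_le _ zero_le_one _

end TwistedAux
namespace TwistedAux

open Set

lemma polytope_of_compact {Z : Type*} [NormedAddCommGroup Z] [NormedSpace ℝ Z]
    (F : Submodule ℝ Z) (Φ : Finset (Z →L[ℝ] ℝ))
    (hP : IsCompact {z : Z | z ∈ F ∧ ∀ φ ∈ Φ, φ z ≤ 1}) :
    ∃ s : Finset Z, {z : Z | z ∈ F ∧ ∀ φ ∈ Φ, φ z ≤ 1} = convexHull ℝ (s : Set Z) := by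
  classical
  set P : Set Z := {z : Z | z ∈ F ∧ ∀ φ ∈ Φ, φ z ≤ 1} with hPdef
  have hconv : Convex ℝ P := by
    have hPeq : P = (F : Set Z) ∩ ⋂ φ ∈ Φ, {z : Z | φ z ≤ 1} := by
      ext z
      simp only [hPdef, Set.mem_setOf_eq, Set.mem_inter_iff, Set.mem_iInter, SetLike.mem_coe]
    rw [hPeq]
    refine F.convex.inter (convex_iInter₂ fun φ _ => ?_)
    exact convex_halfSpace_le (IsLinearMap.mk (map_add φ) (map_smul φ)) 1
  -- extreme points are finite
  have hext_fin : (P.extremePoints ℝ).Finite := by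
    have himfin : ((fun e => Φ.filter (fun φ => φ e = 1)) '' (P.extremePoints ℝ)).Finite :=
      Set.Finite.subset (Φ.powerset : Finset (Finset (Z →L[ℝ] ℝ))).finite_toSet
        (by rintro s ⟨e, _, rfl⟩
            exact Finset.mem_coe.2 (Finset.mem_powerset.2 (Finset.filter_subset _ _)))
    refine Set.Finite.of_finite_image himfin ?_
    intro e he e' he' hTeq
    by_contra hne
    obtain ⟨heP, hkey⟩ := (mem_extremePoints).1 he
    obtain ⟨he'P, _⟩ := (mem_extremePoints).1 he'
    set d : Z := e - e' with hd
    have hdne : d ≠ 0 := sub_ne_zero.2 hne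
    have htight : ∀ φ ∈ Φ, φ e = 1 → φ d = 0 := by
      intro φ hφ hφe
      have h1 : φ ∈ Φ.filter (fun φ => φ e = 1) := Finset.mem_filter.2 ⟨hφ, hφe⟩
      have hTeq' : Φ.filter (fun φ => φ e = 1) = Φ.filter (fun φ => φ e' = 1) := hTeq
      rw [hTeq'] at h1
      have h2 : φ e' = 1 := (Finset.mem_filter.1 h1).2
      simp [hd, map_sub, hφe, h2]
    -- choose t > 0 with t * |φ d| ≤ 1 - φ e for all φ ∈ Φ
    obtain ⟨t, ht0, htle⟩ : ∃ t : ℝ, 0 < t ∧ ∀ φ ∈ Φ, t * |φ d| ≤ 1 - φ e := by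
      by_cases hne' : (Φ.filter (fun φ => φ d ≠ 0)).Nonempty
      · refine ⟨min 1 ((Φ.filter (fun φ => φ d ≠ 0)).inf' hne' (fun φ => (1 - φ e) / |φ d|)),
          ?_, ?_⟩
        · refine lt_min one_pos ?_
          rw [Finset.lt_inf'_iff]
          intro φ hφ
          obtain ⟨hφΦ, hφd⟩ := Finset.mem_filter.1 hφ
          have hlt : φ e < 1 := lt_of_le_of_ne (heP.2 φ hφΦ) (fun h => hφd (htight φ hφΦ h))
          exact div_pos (by linarith) (abs_pos.2 hφd)
        · intro φ hφ
          by_cases hφd : φ d = 0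
          · simp only [hφd, abs_zero, mul_zero]
            linarith [heP.2 φ hφ]
          · have h1 : min 1 ((Φ.filter (fun φ => φ d ≠ 0)).inf' hne' (fun φ => (1 - φ e) / |φ d|))
                ≤ (1 - φ e) / |φ d| :=
              (min_le_right _ _).trans (Finset.inf'_le _ (Finset.mem_filter.2 ⟨hφ, hφd⟩))
            calc min 1 ((Φ.filter (fun φ => φ d ≠ 0)).inf' hne' (fun φ => (1 - φ e) / |φ d|))
                  * |φ d| ≤ ((1 - φ e) / |φ d|) * |φ d| :=
                  mul_le_mul_of_nonneg_right h1 (abs_nonneg _)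
              _ = 1 - φ e := by field_simp
      · refine ⟨1, one_pos, fun φ hφ => ?_⟩
        have hφd : φ d = 0 := by
          by_contra h
          exact hne' ⟨φ, Finset.mem_filter.2 ⟨hφ, h⟩⟩
        simp only [hφd, abs_zero, mul_zero]
        linarith [heP.2 φ hφ]
    have hdF : d ∈ F := F.sub_mem heP.1 he'P.1
    have hx1P : e + t • d ∈ P := by
      refine ⟨F.add_mem heP.1 (F.smul_mem t hdF), fun φ hφ => ?_⟩
      have : φ (e + t • d) = φ e + t * φ d := by simp [map_add, map_smul]
      rw [this]
      have h2 : t * φ d ≤ t * |φ d| :=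
        mul_le_mul_of_nonneg_left (le_abs_self _) ht0.le
      linarith [htle φ hφ]
    have hx2P : e - t • d ∈ P := by
      refine ⟨F.sub_mem heP.1 (F.smul_mem t hdF), fun φ hφ => ?_⟩
      have : φ (e - t • d) = φ e - t * φ d := by simp [map_sub, map_smul]
      rw [this]
      have h2 : -(t * φ d) ≤ t * |φ d| := by
        rw [← mul_neg]
        exact mul_le_mul_of_nonneg_left (neg_le_abs _) ht0.le
      linarith [htle φ hφ]
    have hseg : e ∈ openSegment ℝ (e + t • d) (e - t • d) := by
      refine ⟨1/2, 1/2, by norm_num, by norm_num, by norm_num, ?_⟩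
      module
    have := (hkey _ hx1P _ hx2P hseg).1
    have htd : t • d = 0 := by
      have h := congrArg (fun w => w - e) this
      simpa [add_sub_cancel_left] using h
    rcases smul_eq_zero.1 htd with h | h
    · exact ht0.ne' h
    · exact hdne h
  -- Krein–Milman
  have hKM := closure_convexHull_extremePoints hP hconv
  have hclosed : IsClosed (convexHull ℝ (P.extremePoints ℝ)) :=
    (hext_fin.isCompact_convexHull ℝ).isClosed
  refine ⟨hext_fin.toFinset, ?_⟩
  rw [Set.Finite.coe_toFinset]
  exact (hclosed.closure_eq.symm.trans hKM).symm

end TwistedAux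
namespace TwistedAux

lemma exists_lifted_coords {Γ : Type*} {Z : Type*} [NormedAddCommGroup Z] [NormedSpace ℝ Z] [CompleteSpace Z]
    (j : c0 Γ →L[ℝ] Z) (hinj : Function.Injective j) (hclosed : IsClosed (Set.range j)) :
    ∃ M : ℝ, 1 ≤ M ∧ ∃ f : Γ → (Z →L[ℝ] ℝ), (∀ γ, ‖f γ‖ ≤ M) ∧
      ∀ (γ : Γ) (y : c0 Γ), f γ (j y) = (y : lp (fun _ : Γ => ℝ) ⊤) γ := by
  classical
  set Y : Submodule ℝ Z := LinearMap.range (j : c0 Γ →ₗ[ℝ] Z) with hY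
  have hYset : (Y : Set Z) = Set.range ⇑j := by
    rw [hY]
    exact LinearMap.coe_range _
  have hYclosed : IsClosed (Y : Set Z) := hYset ▸ hclosed
  haveI : CompleteSpace Y := hYclosed.isComplete.completeSpace_coe
  set jcod : c0 Γ →L[ℝ] Y := j.codRestrict Y (fun y => LinearMap.mem_range_self _ y) with hjcod
  have hkerj : LinearMap.ker (jcod : c0 Γ →ₗ[ℝ] Y) = ⊥ := by
    rw [hjcod, ContinuousLinearMap.ker_codRestrict]
    exact LinearMap.ker_eq_bot.2 hinj
  have hrangej : LinearMap.range (jcod : c0 Γ →ₗ[ℝ] Y) = ⊤ := by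
    rw [LinearMap.range_eq_top]
    rintro ⟨z, hz⟩
    obtain ⟨y, rfl⟩ := hz
    exact ⟨y, rfl⟩
  set E := ContinuousLinearEquiv.ofBijective jcod hkerj hrangej with hE
  set Es : Y →L[ℝ] c0 Γ := (E.symm : Y →L[ℝ] c0 Γ) with hEs
  refine ⟨‖Es‖ + 1, by linarith [norm_nonneg Es], ?_⟩
  have hfex : ∀ γ : Γ, ∃ g : Z →L[ℝ] ℝ,
      (∀ x : Y, g x = ((coordCLM γ).comp Es) x) ∧ ‖g‖ = ‖(coordCLM γ).comp Es‖ :=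
    fun γ => exists_extension_norm_eq Y ((coordCLM γ).comp Es)
  choose f hfext hfnorm using hfex
  refine ⟨f, ?_, ?_⟩
  · intro γ
    rw [hfnorm γ]
    calc ‖(coordCLM γ).comp Es‖ ≤ ‖coordCLM (α := Γ) γ‖ * ‖Es‖ :=
          ContinuousLinearMap.opNorm_comp_le _ _
      _ ≤ 1 * ‖Es‖ := mul_le_mul_of_nonneg_right (coordCLM_norm_le γ) (ContinuousLinearMap.opNorm_nonneg Es)
      _ ≤ ‖Es‖ + 1 := by linarith
  · intro γ y
    have h1 : j y = ((jcod y : Y) : Z) := rfl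
    rw [h1, hfext γ (jcod y)]
    have h2 : E.symm (jcod y) = y := by
      rw [hE]
      exact ContinuousLinearEquiv.ofBijective_symm_apply_apply _ _ _ y
    have h3 : Es (jcod y) = y := h2
    simp only [ContinuousLinearMap.coe_comp', Function.comp_apply, h3, coordCLM_apply]

end TwistedAux
open TwistedAux in
/-- Every twisted sum of `c₀(Γ)` and `c₀(I)` is isomorphically polyhedral: it admits an
equivalent norm under which the closed unit ball of every finite-dimensional subspace is
the convex hull of a finite set. -/
theorem twistedSum_c0_c0_isomorphically_polyhedral {Γ I : Type u} [Infinite Γ] [Infinite I]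
    {Z : Type u} [NormedAddCommGroup Z] [NormedSpace ℝ Z] [CompleteSpace Z]
    (j : c0 Γ →L[ℝ] Z) (q : Z →L[ℝ] c0 I) (h : IsTwistedSum j q) :
    ∃ n : Z → ℝ, IsEquivNorm n ∧ IsPolyhedralNorm n := by
  classical
  obtain ⟨hinj, hclosed, hsurj, hker⟩ := h
  obtain ⟨M, hM1, f, hfnormle, hfj⟩ := TwistedAux.exists_lifted_coords j hinj hclosed
  have hM0 : (0:ℝ) < M := by linarith
  -- coordinate functionals on the quotient side
  set g : I → (Z →L[ℝ] ℝ) := fun i => (coordCLM i).comp q with hg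
  have hgz : ∀ (i : I) (z : Z), g i z = ((q z : lp (fun _ : I => ℝ) ⊤)) i := fun i z => rfl
  -- bounded preimages
  obtain ⟨C, hC0, hC⟩ := ContinuousLinearMap.exists_preimage_norm_le q hsurj
  set c : ℝ := 2 * M * C with hc
  have hc0 : (0:ℝ) < c := by positivity
  -- the new norm
  set SupF : Z → ℝ := fun z => ⨆ γ : Γ, |f γ z| with hSupF
  have hbddF : ∀ z : Z, BddAbove (Set.range fun γ : Γ => |f γ z|) := by
    intro z
    refine ⟨M * ‖z‖, ?_⟩
    rintro r ⟨γ, rfl⟩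
    calc |f γ z| = ‖f γ z‖ := (Real.norm_eq_abs _).symm
      _ ≤ ‖f γ‖ * ‖z‖ := (f γ).le_opNorm z
      _ ≤ M * ‖z‖ := mul_le_mul_of_nonneg_right (hfnormle γ) (norm_nonneg _)
  have hFle : ∀ (γ : Γ) (z : Z), |f γ z| ≤ SupF z := fun γ z => le_ciSup (hbddF z) γ
  have hSupFle : ∀ z : Z, SupF z ≤ M * ‖z‖ := by
    intro z
    refine ciSup_le fun γ => ?_
    calc |f γ z| = ‖f γ z‖ := (Real.norm_eq_abs _).symm
      _ ≤ ‖f γ‖ * ‖z‖ := (f γ).le_opNorm z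
      _ ≤ M * ‖z‖ := mul_le_mul_of_nonneg_right (hfnormle γ) (norm_nonneg _)
  have hSupF0 : ∀ z : Z, 0 ≤ SupF z := fun z => Real.iSup_nonneg (fun γ => abs_nonneg _)
  set n : Z → ℝ := fun z => max (c * ‖q z‖) (SupF z) with hn
  have hnq : ∀ z, c * ‖q z‖ ≤ n z := fun z => le_max_left _ _
  have hnS : ∀ z, SupF z ≤ n z := fun z => le_max_right _ _
  have hn0 : ∀ z, 0 ≤ n z := fun z => (hSupF0 z).trans (hnS z)
  -- decomposition lemma
  have hdecomp : ∀ z : Z, ∃ y : c0 Γ, ‖z - j y‖ ≤ C * ‖q z‖ ∧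
      ∀ γ, |f γ z - (y : lp (fun _ : Γ => ℝ) ⊤) γ| ≤ M * C * ‖q z‖ := by
    intro z
    obtain ⟨z0, hz0q, hz0n⟩ := hC (q z)
    have hq0 : q (z - z0) = 0 := by rw [map_sub, hz0q, sub_self]
    obtain ⟨y, hy⟩ := Set.mem_range.1 ((hker _).1 hq0)
    refine ⟨y, ?_, ?_⟩
    · rw [hy]
      simpa using hz0n
    · intro γ
      have h1 : f γ z - (y : lp (fun _ : Γ => ℝ) ⊤) γ = f γ z0 := by
        rw [← hfj γ y, ← map_sub]
        congr 1
        rw [hy]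
        abel
      rw [h1]
      calc |f γ z0| = ‖f γ z0‖ := (Real.norm_eq_abs _).symm
        _ ≤ ‖f γ‖ * ‖z0‖ := (f γ).le_opNorm z0
        _ ≤ M * (C * ‖q z‖) :=
            mul_le_mul (hfnormle γ) hz0n (norm_nonneg _) hM0.le
        _ = M * C * ‖q z‖ := by ring
  -- triangle inequality
  have htri : ∀ z w : Z, n (z + w) ≤ n z + n w := by
    intro z w
    refine max_le ?_ ?_
    · calc c * ‖q (z + w)‖ ≤ c * (‖q z‖ + ‖q w‖) := by
            rw [map_add]; exact mul_le_mul_of_nonneg_left (norm_add_le _ _) hc0.le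
        _ = c * ‖q z‖ + c * ‖q w‖ := by ring
        _ ≤ n z + n w := add_le_add (hnq z) (hnq w)
    · refine ciSup_le fun γ => ?_
      calc |f γ (z + w)| = |f γ z + f γ w| := by rw [map_add]
        _ ≤ |f γ z| + |f γ w| := abs_add_le _ _
        _ ≤ SupF z + SupF w := add_le_add (hFle γ z) (hFle γ w)
        _ ≤ n z + n w := add_le_add (hnS z) (hnS w)
  -- homogeneity
  have hSupFsmul : ∀ (a : ℝ) (z : Z), SupF (a • z) = |a| * SupF z := by
    have key : ∀ (a : ℝ) (z : Z), SupF (a • z) ≤ |a| * SupF z := by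
      intro a z
      refine ciSup_le fun γ => ?_
      have : |f γ (a • z)| = |a| * |f γ z| := by
        rw [map_smul, smul_eq_mul, abs_mul]
      rw [this]
      exact mul_le_mul_of_nonneg_left (hFle γ z) (abs_nonneg a)
    intro a z
    rcases eq_or_ne a 0 with rfl | ha
    · simp only [zero_smul, abs_zero, zero_mul]
      refine le_antisymm (ciSup_le fun γ => by simp) (hSupF0 0)
    · refine le_antisymm (key a z) ?_
      have h2 := key a⁻¹ (a • z)
      rw [inv_smul_smul₀ ha] at h2
      have h3 : |a| * SupF z ≤ |a| * (|a⁻¹| * SupF (a • z)) :=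
        mul_le_mul_of_nonneg_left h2 (abs_nonneg a)
      rwa [abs_inv, ← mul_assoc, mul_inv_cancel₀ (abs_ne_zero.2 ha), one_mul] at h3
  have hhom : ∀ (a : ℝ) (z : Z), n (a • z) = |a| * n z := by
    intro a z
    have h1 : c * ‖q (a • z)‖ = |a| * (c * ‖q z‖) := by
      rw [map_smul, norm_smul, Real.norm_eq_abs]; ring
    simp only [hn, h1, hSupFsmul a z]
    exact (mul_max_of_nonneg _ _ (abs_nonneg a)).symm
  -- upper bound
  set K : ℝ := c * ‖q‖ + M with hK
  have hK0 : (0:ℝ) < K := by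
    have : (0:ℝ) ≤ c * ‖q‖ := by positivity
    linarith
  have hupper : ∀ z : Z, n z ≤ K * ‖z‖ := by
    intro z
    refine max_le ?_ ?_
    · calc c * ‖q z‖ ≤ c * (‖q‖ * ‖z‖) :=
            mul_le_mul_of_nonneg_left (q.le_opNorm z) hc0.le
        _ ≤ K * ‖z‖ := by
            rw [hK, ← mul_assoc]
            have : (0:ℝ) ≤ M * ‖z‖ := by positivity
            nlinarith [norm_nonneg z]
    · calc SupF z ≤ M * ‖z‖ := hSupFle z
        _ ≤ K * ‖z‖ := by
            have : (0:ℝ) ≤ c * ‖q‖ * ‖z‖ := by positivity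
            nlinarith [norm_nonneg z]
  -- key: `M * C * ‖q z‖ ≤ n z / 2`
  have hMC : ∀ z : Z, M * C * ‖q z‖ ≤ n z / 2 := by
    intro z
    have : M * C * ‖q z‖ = (c * ‖q z‖) / 2 := by rw [hc]; ring
    rw [this]
    linarith [hnq z]
  -- lower bound
  set K2 : ℝ := (3 * ‖j‖ + 1) / 2 with hK2
  have hK20 : (0:ℝ) < K2 := by
    have := norm_nonneg j
    rw [hK2]; linarith
  have hlower : ∀ z : Z, ‖z‖ ≤ K2 * n z := by
    intro z
    obtain ⟨y, hy1, hy2⟩ := hdecomp z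
    have hyn : ‖y‖ ≤ 3 / 2 * n z := by
      rw [c0_norm_eq]
      refine ciSup_le fun γ => ?_
      calc |(y : lp (fun _ : Γ => ℝ) ⊤) γ|
          ≤ |f γ z| + |f γ z - (y : lp (fun _ : Γ => ℝ) ⊤) γ| := by
            have := abs_sub_abs_le_abs_sub (f γ z) (f γ z - (y : lp (fun _ : Γ => ℝ) ⊤) γ)
            have h2 : f γ z - (f γ z - (y : lp (fun _ : Γ => ℝ) ⊤) γ)
                = (y : lp (fun _ : Γ => ℝ) ⊤) γ := by ring
            calc |(y : lp (fun _ : Γ => ℝ) ⊤) γ|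
                = |f γ z - (f γ z - (y : lp (fun _ : Γ => ℝ) ⊤) γ)| := by rw [h2]
              _ ≤ |f γ z| + |f γ z - (y : lp (fun _ : Γ => ℝ) ⊤) γ| := abs_sub _ _
        _ ≤ SupF z + M * C * ‖q z‖ := add_le_add (hFle γ z) (hy2 γ)
        _ ≤ n z + n z / 2 := add_le_add (hnS z) (hMC z)
        _ = 3 / 2 * n z := by ring
    have hCq : C * ‖q z‖ ≤ n z / 2 := by
      have h1 : C * ‖q z‖ ≤ M * C * ‖q z‖ := by
        have : (0:ℝ) ≤ C * ‖q z‖ := by positivity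
        nlinarith
      linarith [hMC z]
    calc ‖z‖ = ‖j y + (z - j y)‖ := by rw [add_sub_cancel]
      _ ≤ ‖j y‖ + ‖z - j y‖ := norm_add_le _ _
      _ ≤ ‖j‖ * ‖y‖ + C * ‖q z‖ := add_le_add (j.le_opNorm y) hy1
      _ ≤ ‖j‖ * (3 / 2 * n z) + n z / 2 := by
          refine add_le_add (mul_le_mul_of_nonneg_left hyn (norm_nonneg j)) hCq
      _ = K2 * n z := by rw [hK2]; ring
  -- attainment of the norm
  have hattain : ∀ z : Z, n z = 1 → (∃ i, c * |g i z| = 1) ∨ (∃ γ, |f γ z| = 1) := by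
    intro z hz1
    rcases lt_or_ge (c * ‖q z‖) 1 with hlt | hge
    · -- the sup over Γ is 1 and is attained
      have hS1 : SupF z = 1 := by
        have hmx : max (c * ‖q z‖) (SupF z) = 1 := hz1
        rcases max_eq_iff.1 hmx with ⟨h1, _⟩ | ⟨h1, _⟩
        · linarith
        · exact h1
      obtain ⟨y, hy1, hy2⟩ := hdecomp z
      have hhalf : ∀ γ, |f γ z - (y : lp (fun _ : Γ => ℝ) ⊤) γ| < 1/2 := by
        intro γ
        refine lt_of_le_of_lt (hy2 γ) ?_
        have : M * C * ‖q z‖ = (c * ‖q z‖) / 2 := by rw [hc]; ring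
        rw [this]; linarith
      have hGfin := c0_finite y (show (0:ℝ) < 1/4 by norm_num)
      obtain ⟨γ1, hγ1⟩ : ∃ γ, 3/4 < |f γ z| := by
        apply exists_lt_of_lt_ciSup
        have : (⨆ γ, |f γ z|) = SupF z := rfl
        rw [this, hS1]; norm_num
      have hγ1G : γ1 ∈ hGfin.toFinset := by
        rw [Set.Finite.mem_toFinset]
        have h2 := abs_sub_abs_le_abs_sub (f γ1 z) (f γ1 z - (y : lp (fun _ : Γ => ℝ) ⊤) γ1)
        have h3 : f γ1 z - (f γ1 z - (y : lp (fun _ : Γ => ℝ) ⊤) γ1)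
            = (y : lp (fun _ : Γ => ℝ) ⊤) γ1 := by ring
        rw [h3] at h2
        have h4 := hhalf γ1
        show (1:ℝ)/4 ≤ |(y : lp (fun _ : Γ => ℝ) ⊤) γ1|
        linarith
      obtain ⟨γ0, hγ0G, hmax⟩ := hGfin.toFinset.exists_max_image (fun γ => |f γ z|) ⟨γ1, hγ1G⟩
      right
      refine ⟨γ0, ?_⟩
      have hall : ∀ γ, |f γ z| ≤ |f γ0 z| := by
        intro γ
        by_cases hγ : γ ∈ hGfin.toFinset
        · exact hmax γ hγ
        · have h4 : ¬ ((1:ℝ)/4 ≤ |(y : lp (fun _ : Γ => ℝ) ⊤) γ|) := by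
            rw [Set.Finite.mem_toFinset] at hγ
            exact hγ
          push_neg at h4
          have h5 := hmax γ1 hγ1G
          have h6 := hhalf γ
          have h7 : |f γ z| ≤ |(y : lp (fun _ : Γ => ℝ) ⊤) γ|
              + |f γ z - (y : lp (fun _ : Γ => ℝ) ⊤) γ| := by
            have h8 : f γ z = (y : lp (fun _ : Γ => ℝ) ⊤) γ
                + (f γ z - (y : lp (fun _ : Γ => ℝ) ⊤) γ) := by ring
            calc |f γ z| = |(y : lp (fun _ : Γ => ℝ) ⊤) γ
                + (f γ z - (y : lp (fun _ : Γ => ℝ) ⊤) γ)| := by rw [← h8]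
              _ ≤ _ := abs_add_le _ _
          linarith
      have hle : |f γ0 z| ≤ SupF z := hFle γ0 z
      have hge2 : SupF z ≤ |f γ0 z| := ciSup_le hall
      linarith
    · -- the quotient part attains
      have heq : c * ‖q z‖ = 1 := le_antisymm (by rw [← hz1]; exact hnq z) hge
      have hqne : q z ≠ 0 := by
        intro h0
        rw [h0, norm_zero, mul_zero] at heq
        norm_num at heq
      obtain ⟨i, hi⟩ := c0_exists_abs_eq_norm (q z) hqne
      exact Or.inl ⟨i, by rw [hgz, hi]; exact heq⟩
  -- Lipschitz continuity of n
  have hndiff : ∀ a b : Z, |n a - n b| ≤ K * ‖a - b‖ := by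
    intro a b
    have h1 : n a ≤ n (a - b) + n b := by
      have := htri (a - b) b
      rwa [sub_add_cancel] at this
    have h3 : n (b - a) = n (a - b) := by
      have hba : b - a = (-1 : ℝ) • (a - b) := by
        rw [neg_one_smul]; abel
      rw [hba, hhom]
      norm_num
    have h2 : n b ≤ n (a - b) + n a := by
      have := htri (b - a) a
      rw [sub_add_cancel, h3] at this
      exact this
    have h4 : n (a - b) ≤ K * ‖a - b‖ := hupper _
    rw [abs_sub_le_iff]
    constructor <;> linarith
  have hncont : Continuous n := by
    rw [Metric.continuous_iff]
    intro b ε hε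
    refine ⟨ε / (K + 1), by positivity, fun a ha => ?_⟩
    rw [Real.dist_eq]
    rw [dist_eq_norm] at ha
    have h1 := hndiff a b
    have h2 : K * ‖a - b‖ < ε := by
      have h3 : K * ‖a - b‖ ≤ K * (ε / (K + 1)) :=
        mul_le_mul_of_nonneg_left ha.le hK0.le
      have h4 : K * (ε / (K + 1)) < ε := by
        rw [mul_div_assoc']
        rw [div_lt_iff₀ (by linarith : (0:ℝ) < K + 1)]
        nlinarith
      exact lt_of_le_of_lt h3 h4
    linarith
  refine ⟨n, ⟨htri, hhom, K2⁻¹, K, inv_pos.2 hK20, hK0, fun z => ⟨?_, hupper z⟩⟩, ?_⟩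
  · rw [inv_mul_le_iff₀ hK20]
    exact hlower z
  -- polyhedrality
  intro F hFD
  haveI := hFD
  have hFclosed : IsClosed (F : Set Z) := Submodule.closed_of_finiteDimensional F
  have hball : IsCompact {z : Z | z ∈ F ∧ n z ≤ 1} := by
    have hQc : IsClosed {y : F | n ↑y ≤ 1} :=
      IsClosed.preimage (hncont.comp continuous_subtype_val) isClosed_Iic
    have hQb : Bornology.IsBounded {y : F | n ↑y ≤ 1} := by
      refine (Metric.isBounded_closedBall (x := (0:F)) (r := K2)).subset ?_
      intro y hy
      simp only [Set.mem_setOf_eq] at hy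
      rw [Metric.mem_closedBall, dist_zero_right]
      calc ‖y‖ = ‖(y : Z)‖ := rfl
        _ ≤ K2 * n ↑y := hlower _
        _ ≤ K2 * 1 := mul_le_mul_of_nonneg_left hy hK20.le
        _ = K2 := mul_one _
    have hQcpt : IsCompact {y : F | n ↑y ≤ 1} :=
      Metric.isCompact_of_isClosed_isBounded hQc hQb
    have himg : {z : Z | z ∈ F ∧ n z ≤ 1} = Subtype.val '' {y : F | n ↑y ≤ 1} := by
      ext z
      constructor
      · rintro ⟨hzF, hzn⟩
        exact ⟨⟨z, hzF⟩, hzn, rfl⟩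
      · rintro ⟨y, hy, rfl⟩
        exact ⟨y.2, hy⟩
    rw [himg]
    exact hQcpt.image continuous_subtype_val
  set S : Set Z := {z : Z | z ∈ F ∧ n z = 1} with hSdef
  have hScl : IsClosed S := by
    have : S = (F : Set Z) ∩ n ⁻¹' {1} := by
      ext z; simp [hSdef, Set.mem_setOf_eq]
    rw [this]
    exact hFclosed.inter (isClosed_singleton.preimage hncont)
  have hScpt : IsCompact S :=
    hball.of_isClosed_subset hScl (fun z hz => ⟨hz.1, hz.2.le⟩)
  -- the attaining index sets are finite
  set AΓ : Set Γ := {γ : Γ | ∃ z ∈ S, |f γ z| = 1} with hAΓdef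
  set AI : Set I := {i : I | ∃ z ∈ S, c * |g i z| = 1} with hAIdef
  have hAΓfin : AΓ.Finite := by
    by_contra hfin
    have hinf : AΓ.Infinite := hfin
    set emb := hinf.natEmbedding with hembdef
    have hembinj : Function.Injective (fun k : ℕ => (emb k : Γ)) :=
      fun a b hab => emb.injective (Subtype.ext hab)
    have hmem : ∀ k : ℕ, ∃ z ∈ S, |f (emb k : Γ) z| = 1 := fun k => (emb k).2
    choose zk hzkS hzk using hmem
    obtain ⟨z, hzS, φ, hφmono, hφtend⟩ := hScpt.tendsto_subseq hzkS
    obtain ⟨y, hy1, hy2⟩ := hdecomp z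
    have hnz1 : n z = 1 := hzS.2
    have hyb : ∀ γ, |f γ z - (y : lp (fun _ : Γ => ℝ) ⊤) γ| ≤ 1/2 := by
      intro γ
      refine (hy2 γ).trans ?_
      have := hMC z
      linarith
    have hGfin := c0_finite y (show (0:ℝ) < 1/4 by norm_num)
    have hev := (Metric.tendsto_nhds.1 hφtend) (1/(8*M)) (by positivity)
    obtain ⟨K0, hK0'⟩ := Filter.eventually_atTop.1 hev
    have hsub : Set.range (fun m : ℕ => ((emb (φ (K0 + m)) : Γ)))
        ⊆ {γ : Γ | 1/4 ≤ |(y : lp (fun _ : Γ => ℝ) ⊤) γ|} := by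
      rintro _ ⟨m, rfl⟩
      have hdist : dist (zk (φ (K0 + m))) z < 1/(8*M) :=
        hK0' (K0 + m) (Nat.le_add_right _ _)
      set γ : Γ := (emb (φ (K0 + m)) : Γ)
      have h1 : |f γ (zk (φ (K0 + m)))| = 1 := hzk (φ (K0 + m))
      have h2 : |f γ (zk (φ (K0 + m))) - f γ z| ≤ M * ‖zk (φ (K0 + m)) - z‖ := by
        rw [← map_sub]
        calc |f γ (zk (φ (K0 + m)) - z)| = ‖f γ (zk (φ (K0 + m)) - z)‖ :=
              (Real.norm_eq_abs _).symm
          _ ≤ ‖f γ‖ * ‖zk (φ (K0 + m)) - z‖ := (f γ).le_opNorm _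
          _ ≤ M * ‖zk (φ (K0 + m)) - z‖ :=
              mul_le_mul_of_nonneg_right (hfnormle γ) (norm_nonneg _)
      have h3 : M * ‖zk (φ (K0 + m)) - z‖ < M * (1/(8*M)) := by
        rw [← dist_eq_norm] at *
        exact mul_lt_mul_of_pos_left hdist hM0
      have h4 : M * (1/(8*M)) = 1/8 := by field_simp
      have h5 : |f γ z| ≥ 7/8 := by
        have := abs_sub_abs_le_abs_sub (f γ (zk (φ (K0 + m)))) (f γ z)
        linarith
      have h6 := hyb γ
      have h7 := abs_sub_abs_le_abs_sub (f γ z) (f γ z - (y : lp (fun _ : Γ => ℝ) ⊤) γ)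
      have h8 : f γ z - (f γ z - (y : lp (fun _ : Γ => ℝ) ⊤) γ)
          = (y : lp (fun _ : Γ => ℝ) ⊤) γ := by ring
      rw [h8] at h7
      show (1:ℝ)/4 ≤ |(y : lp (fun _ : Γ => ℝ) ⊤) γ|
      linarith
    have hinj2 : Function.Injective (fun m : ℕ => ((emb (φ (K0 + m)) : Γ))) := by
      intro a b hab
      have := hembinj hab
      have h2 := hφmono.injective this
      omega
    exact (Set.infinite_range_of_injective hinj2) (hGfin.subset hsub)
  have hAIfin : AI.Finite := by
    by_contra hfin
    have hinf : AI.Infinite := hfin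
    set emb := hinf.natEmbedding with hembdef
    have hembinj : Function.Injective (fun k : ℕ => (emb k : I)) :=
      fun a b hab => emb.injective (Subtype.ext hab)
    have hmem : ∀ k : ℕ, ∃ z ∈ S, c * |g (emb k : I) z| = 1 := fun k => (emb k).2
    choose zk hzkS hzk using hmem
    obtain ⟨z, hzS, φ, hφmono, hφtend⟩ := hScpt.tendsto_subseq hzkS
    have hQfin := c0_finite (q z) (show (0:ℝ) < 1/(2*c) by positivity)
    have hev := (Metric.tendsto_nhds.1 hφtend) (1/(2*c*(‖q‖+1))) (by positivity)
    obtain ⟨K0, hK0'⟩ := Filter.eventually_atTop.1 hev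
    have hsub : Set.range (fun m : ℕ => ((emb (φ (K0 + m)) : I)))
        ⊆ {i : I | 1/(2*c) ≤ |((q z : lp (fun _ : I => ℝ) ⊤)) i|} := by
      rintro _ ⟨m, rfl⟩
      have hdist : dist (zk (φ (K0 + m))) z < 1/(2*c*(‖q‖+1)) :=
        hK0' (K0 + m) (Nat.le_add_right _ _)
      set i : I := (emb (φ (K0 + m)) : I)
      have h1 : c * |g i (zk (φ (K0 + m)))| = 1 := hzk (φ (K0 + m))
      have h1' : |g i (zk (φ (K0 + m)))| = 1/c := by
        field_simp at h1 ⊢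
        linarith
      have h2 : |g i (zk (φ (K0 + m))) - g i z| ≤ ‖q‖ * ‖zk (φ (K0 + m)) - z‖ := by
        rw [← map_sub]
        have hq1 : |g i (zk (φ (K0 + m)) - z)|
            ≤ ‖q (zk (φ (K0 + m)) - z)‖ := by
          rw [hgz]
          exact c0_coord_abs_le _ i
        refine hq1.trans ?_
        exact q.le_opNorm _
      have h3 : ‖q‖ * ‖zk (φ (K0 + m)) - z‖ ≤ 1/(2*c) := by
        rw [← dist_eq_norm]
        have h4 : ‖q‖ * dist (zk (φ (K0 + m))) z ≤ ‖q‖ * (1/(2*c*(‖q‖+1))) :=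
          mul_le_mul_of_nonneg_left hdist.le (norm_nonneg q)
        refine h4.trans ?_
        have hq0 := norm_nonneg q
        rw [mul_one_div, div_le_div_iff₀ (by positivity) (by positivity)]
        nlinarith
      have h5 : |g i z| ≥ 1/(2*c) := by
        have := abs_sub_abs_le_abs_sub (g i (zk (φ (K0 + m)))) (g i z)
        have hc' : 1/c - 1/(2*c) = 1/(2*c) := by field_simp; ring
        linarith
      show (1:ℝ)/(2*c) ≤ |((q z : lp (fun _ : I => ℝ) ⊤)) i|
      rw [← hgz]
      exact h5
    have hinj2 : Function.Injective (fun m : ℕ => ((emb (φ (K0 + m)) : I))) := by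
      intro a b hab
      have := hembinj hab
      have h2 := hφmono.injective this
      omega
    exact (Set.infinite_range_of_injective hinj2) (hQfin.subset hsub)
  -- the finite family of functionals
  set Φ : Finset (Z →L[ℝ] ℝ) :=
    ((hAΓfin.toFinset.image fun γ => f γ) ∪ (hAΓfin.toFinset.image fun γ => -(f γ))) ∪
    ((hAIfin.toFinset.image fun i => c • g i) ∪ (hAIfin.toFinset.image fun i => -(c • g i)))
    with hΦdef
  have hset : {z : Z | z ∈ F ∧ n z ≤ 1} = {z : Z | z ∈ F ∧ ∀ φ ∈ Φ, φ z ≤ 1} := by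
    ext z
    simp only [Set.mem_setOf_eq]
    constructor
    · rintro ⟨hzF, hzn⟩
      refine ⟨hzF, fun φ hφ => ?_⟩
      simp only [hΦdef, Finset.mem_union, Finset.mem_image,
        Set.Finite.mem_toFinset] at hφ
      have hqb : ∀ i : I, c * |g i z| ≤ 1 := by
        intro i
        have h1 : |g i z| ≤ ‖q z‖ := by
          rw [hgz]
          exact c0_coord_abs_le _ i
        have h2 : c * |g i z| ≤ c * ‖q z‖ := mul_le_mul_of_nonneg_left h1 hc0.le
        linarith [hnq z]
      have hfb : ∀ γ : Γ, |f γ z| ≤ 1 := fun γ => (hFle γ z).trans ((hnS z).trans hzn)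
      rcases hφ with (⟨γ, _, rfl⟩ | ⟨γ, _, rfl⟩) | (⟨i, _, rfl⟩ | ⟨i, _, rfl⟩)
      · exact (le_abs_self _).trans (hfb γ)
      · have happ : (-(f γ)) z = -(f γ z) := rfl
        rw [happ]
        have := neg_abs_le (f γ z)
        linarith [hfb γ]
      · have happ : (c • g i) z = c * (g i z) := rfl
        rw [happ]
        have h1 : c * g i z ≤ c * |g i z| :=
          mul_le_mul_of_nonneg_left (le_abs_self _) hc0.le
        linarith [hqb i]
      · have happ : (-(c • g i)) z = -(c * (g i z)) := rfl
        rw [happ]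
        have h1 : -(c * g i z) ≤ c * |g i z| := by
          have := neg_abs_le (g i z)
          nlinarith [abs_nonneg (g i z)]
        linarith [hqb i]
    · rintro ⟨hzF, hφall⟩
      refine ⟨hzF, ?_⟩
      by_contra hgt
      push_neg at hgt
      have hnz0 : (0:ℝ) < n z := lt_trans one_pos hgt
      set z' : Z := (n z)⁻¹ • z with hz'def
      have hz'F : z' ∈ F := F.smul_mem _ hzF
      have hnz' : n z' = 1 := by
        rw [hz'def, hhom, abs_of_pos (inv_pos.2 hnz0), inv_mul_cancel₀ hnz0.ne']
      have hz'S : z' ∈ S := ⟨hz'F, hnz'⟩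
      rcases hattain z' hnz' with ⟨i, hi⟩ | ⟨γ, hγ⟩
      · have hiA : i ∈ AI := ⟨z', hz'S, hi⟩
        have h1 : g i z' = (n z)⁻¹ * g i z := by
          rw [hz'def, map_smul, smul_eq_mul]
        have hval : c * |g i z| = n z := by
          have h2 : c * |g i z'| = (n z)⁻¹ * (c * |g i z|) := by
            rw [h1, abs_mul, abs_of_pos (inv_pos.2 hnz0)]; ring
        -- from hi : c * |g i z'| = 1
          rw [h2] at hi
          field_simp at hi
          linarith
        rcases le_or_gt 0 (g i z) with hsgn | hsgn
        · have hφΦ : (c • g i) ∈ Φ := by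
            simp only [hΦdef, Finset.mem_union, Finset.mem_image,
              Set.Finite.mem_toFinset]
            exact Or.inr (Or.inl ⟨i, hiA, rfl⟩)
          have h3 := hφall _ hφΦ
          have happ : (c • g i) z = c * (g i z) := rfl
          rw [happ] at h3
          rw [abs_of_nonneg hsgn] at hval
          linarith
        · have hφΦ : (-(c • g i)) ∈ Φ := by
            simp only [hΦdef, Finset.mem_union, Finset.mem_image,
              Set.Finite.mem_toFinset]
            exact Or.inr (Or.inr ⟨i, hiA, rfl⟩)
          have h3 := hφall _ hφΦ
          have happ : (-(c • g i)) z = -(c * (g i z)) := rfl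
          rw [happ] at h3
          rw [abs_of_neg hsgn] at hval
          linarith
      · have hγA : γ ∈ AΓ := ⟨z', hz'S, hγ⟩
        have h1 : f γ z' = (n z)⁻¹ * f γ z := by
          rw [hz'def, map_smul, smul_eq_mul]
        have hval : |f γ z| = n z := by
          have h2 : |f γ z'| = (n z)⁻¹ * |f γ z| := by
            rw [h1, abs_mul, abs_of_pos (inv_pos.2 hnz0)]
          rw [h2] at hγ
          field_simp at hγ
          linarith
        rcases le_or_gt 0 (f γ z) with hsgn | hsgn
        · have hφΦ : f γ ∈ Φ := by
            simp only [hΦdef, Finset.mem_union, Finset.mem_image,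
              Set.Finite.mem_toFinset]
            exact Or.inl (Or.inl ⟨γ, hγA, rfl⟩)
          have h3 := hφall _ hφΦ
          rw [abs_of_nonneg hsgn] at hval
          linarith
        · have hφΦ : (-(f γ)) ∈ Φ := by
            simp only [hΦdef, Finset.mem_union, Finset.mem_image,
              Set.Finite.mem_toFinset]
            exact Or.inl (Or.inr ⟨γ, hγA, rfl⟩)
          have h3 := hφall _ hφΦ
          have happ : (-(f γ)) z = -(f γ z) := rfl
          rw [happ] at h3
          rw [abs_of_neg hsgn] at hval
          linarith
  obtain ⟨s, hs⟩ := TwistedAux.polytope_of_compact F Φ (hset ▸ hball)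
  exact ⟨s, hset.trans hs⟩
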